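/- Let K be a field of characteristic zero which is not algebraically closed but such that K[X]/(X^2+1) is algebraically closed, and let K_{>0} = {a^2 : a ∈ K, a ≠ 0}. Then for every a ∈ K with a ≠ 0, exactly one of the following holds: a ∈ K_{>0} or −a ∈ K_{>0}. Consequently the relation a > b defined by a − b ∈ K_{>0} is a total (linear) order on K. -/

import Mathlib

open Polynomial

/-- Key divisibility fact: if `X^2+1` divides a polynomial `C u + C v * X`, then `u = v = 0`. -/
lemma aux_dvd_linear {K : Type*} [Field K] {u v : K}
    (h : ((X : Polynomial K) ^ 2 + 1) ∣ (C u + C v * X)) : u = 0 ∧ v = 0 := by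
  have hf : ((X : Polynomial K) ^ 2 + 1) = X ^ 2 + C 1 := by simp
  have hz : C u + C v * X = 0 := by
    by_contra hne
    have hd := Polynomial.natDegree_le_of_dvd h hne
    rw [hf, Polynomial.natDegree_X_pow_add_C] at hd
    have : (C u + C v * X).natDegree ≤ 1 := by
      apply Polynomial.natDegree_add_le_of_degree_le
      · simp
      · exact (Polynomial.natDegree_C_mul_le _ _).trans (by simp)
    omega
  constructor
  · have := congrArg (fun p => Polynomial.coeff p 0) hz
    simpa using this
  · have := congrArg (fun p => Polynomial.coeff p 1) hz
    simpa using this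

/-- In a real closed field `K`, for every nonzero `a` exactly one of `a`, `-a` is a nonzero
square, and consequently the relation `a > b ↔ a - b ∈ K_{>0}` is a total order on `K`
(trichotomy holds). -/
theorem pos_trichotomy (K : Type*) [Field K] [CharZero K]
    (hK : ¬ IsAlgClosed K)
    (hfield : IsField (AdjoinRoot ((X : Polynomial K) ^ 2 + 1)))
    (halg : @IsAlgClosed (AdjoinRoot ((X : Polynomial K) ^ 2 + 1)) hfield.toField) :
    (∀ a : K, a ≠ 0 →
      Xor' (a ∈ {x : K | ∃ c : K, c ≠ 0 ∧ x = c ^ 2})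
           (-a ∈ {x : K | ∃ c : K, c ≠ 0 ∧ x = c ^ 2})) ∧
    (∀ a b : K, a = b ∨ a - b ∈ {x : K | ∃ c : K, c ≠ 0 ∧ x = c ^ 2}
      ∨ b - a ∈ {x : K | ∃ c : K, c ≠ 0 ∧ x = c ^ 2}) := by
  classical
  set f : Polynomial K := (X : Polynomial K) ^ 2 + 1 with hf_def
  have hfmonic : f.Monic := by
    have := Polynomial.monic_X_pow_add_C (R := K) 1 (n := 2) (by norm_num)
    simpa [hf_def] using this
  have hfdeg : f.natDegree = 2 := by
    rw [hf_def]
    simpa using Polynomial.natDegree_X_pow_add_C (R := K) (r := (1:K)) (n := 2)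
  -- -1 is not a square in K
  have hneg1 : ∀ e : K, e ^ 2 ≠ -1 := by
    intro e he
    have hce : (C e : Polynomial K) ^ 2 = -1 := by
      rw [← map_pow, he]; simp
    have h1 : AdjoinRoot.mk f (X - C e) * AdjoinRoot.mk f (X + C e) = 0 := by
      rw [← map_mul, ← AdjoinRoot.mk_self (f := f)]
      congr 1
      rw [hf_def]
      linear_combination -hce
    have h2 : AdjoinRoot.mk f (X - C e) ≠ 0 := by
      intro h0
      rw [AdjoinRoot.mk_eq_zero] at h0
      have hdvd := h0
      have hne : (X : Polynomial K) - C e ≠ 0 := Polynomial.X_sub_C_ne_zero e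
      have := Polynomial.natDegree_le_of_dvd hdvd hne
      rw [Polynomial.natDegree_X_sub_C] at this
      omega
    have h3 : AdjoinRoot.mk f (X + C e) ≠ 0 := by
      intro h0
      rw [AdjoinRoot.mk_eq_zero] at h0
      have hdvd := h0
      have hne : (X : Polynomial K) + C e ≠ 0 := by
        intro h
        have := congrArg (fun p => Polynomial.coeff p 1) h
        simpa using this
      have h4 := Polynomial.natDegree_le_of_dvd hdvd hne
      have h5 : ((X : Polynomial K) + C e).natDegree ≤ 1 := by
        apply Polynomial.natDegree_add_le_of_degree_le <;> simp
      omega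
    obtain ⟨u, hu⟩ := hfield.mul_inv_cancel h2
    apply h3
    have : AdjoinRoot.mk f (X + C e)
        = u * (AdjoinRoot.mk f (X - C e) * AdjoinRoot.mk f (X + C e)) := by
      rw [← mul_assoc, mul_comm u, hu, one_mul]
    rw [h1, mul_zero] at this
    exact this
  letI : Field (AdjoinRoot f) := hfield.toField
  haveI : IsAlgClosed (AdjoinRoot f) := halg
  -- main claim: for a ≠ 0, a or -a is a nonzero square, and not both
  have main : ∀ a : K, a ≠ 0 →
      Xor' (a ∈ {x : K | ∃ c : K, c ≠ 0 ∧ x = c ^ 2})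
           (-a ∈ {x : K | ∃ c : K, c ≠ 0 ∧ x = c ^ 2}) := by
    intro a ha
    have hnotboth : ¬ ((∃ c : K, c ≠ 0 ∧ a = c ^ 2) ∧ (∃ c : K, c ≠ 0 ∧ -a = c ^ 2)) := by
      rintro ⟨⟨c, hc, rfl⟩, ⟨d, hd, hd2⟩⟩
      apply hneg1 (d / c)
      rw [div_pow, ← hd2, neg_div, div_self (pow_ne_zero 2 hc)]
    -- existence: a or -a is a nonzero square
    have hex : (∃ c : K, c ≠ 0 ∧ a = c ^ 2) ∨ (∃ c : K, c ≠ 0 ∧ -a = c ^ 2) := by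
      obtain ⟨z, hz⟩ := IsAlgClosed.exists_pow_nat_eq (algebraMap K (AdjoinRoot f) a)
        (n := 2) (by norm_num)
      obtain ⟨p, rfl⟩ := AdjoinRoot.mk_surjective (g := f) z
      set r := p %ₘ f with hr_def
      have hzr : AdjoinRoot.mk f p = AdjoinRoot.mk f r := by
        rw [AdjoinRoot.mk_eq_mk]
        refine ⟨p /ₘ f, ?_⟩
        have := Polynomial.modByMonic_add_div p f
        linear_combination -this
      have hrdeg : r.natDegree ≤ 1 := by
        by_cases hr0 : r = 0
        · simp [hr0]
        · have h1 := Polynomial.degree_modByMonic_lt p hfmonic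
          have h2 : f.degree = 2 := by
            rw [hf_def]
            simpa using Polynomial.degree_X_pow_add_C (R := K) (n := 2) (by norm_num) (1:K)
          rw [h2] at h1
          have h3 : r.natDegree < 2 := by
            rw [Polynomial.natDegree_lt_iff_degree_lt hr0]
            exact_mod_cast h1
          omega
      set c₀ := r.coeff 0 with hc0
      set c₁ := r.coeff 1 with hc1
      have hrform : r = C c₁ * X + C c₀ := Polynomial.eq_X_add_C_of_natDegree_le_one hrdeg
      -- z^2 = algebraMap a gives f ∣ r^2 - C a
      have hz2 : AdjoinRoot.mk f (r ^ 2) = AdjoinRoot.mk f (C a) := by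
        have e1 : (AdjoinRoot.mk f r) ^ 2 = algebraMap K (AdjoinRoot f) a := by
          rw [← hzr]; exact hz
        rw [map_pow, e1]
        rfl
      have hdvd : f ∣ r ^ 2 - C a := AdjoinRoot.mk_eq_mk.mp hz2
      have hdvd2 : f ∣ C (c₀ ^ 2 - c₁ ^ 2 - a) + C (2 * c₀ * c₁) * X := by
        have heq : C (c₀ ^ 2 - c₁ ^ 2 - a) + C (2 * c₀ * c₁) * X
            = (r ^ 2 - C a) - C (c₁ ^ 2) * f := by
          rw [hrform, hf_def]
          simp only [map_sub, map_add, map_mul, map_pow, map_ofNat]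
          ring
        rw [heq]
        exact dvd_sub hdvd (Dvd.intro_left _ rfl)
      obtain ⟨h1, h2⟩ := aux_dvd_linear hdvd2
      have h2' : c₀ = 0 ∨ c₁ = 0 := by
        rcases mul_eq_zero.mp h2 with h | h
        · rcases mul_eq_zero.mp h with h | h
          · norm_num at h
          · exact Or.inl h
        · exact Or.inr h
      rcases h2' with h | h
      · right
        rw [h] at h1
        refine ⟨c₁, ?_, by linear_combination h1⟩
        intro hc
        apply ha
        rw [hc] at h1
        linear_combination -h1
      · left
        rw [h] at h1
        refine ⟨c₀, ?_, by linear_combination -h1⟩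
        intro hc
        apply ha
        rw [hc] at h1
        linear_combination -h1
    rcases hex with h | h
    · exact Or.inl ⟨h, fun h' => hnotboth ⟨h, h'⟩⟩
    · exact Or.inr ⟨h, fun h' => hnotboth ⟨h', h⟩⟩
  refine ⟨main, ?_⟩
  intro a b
  by_cases hab : a = b
  · exact Or.inl hab
  · have := main (a - b) (sub_ne_zero_of_ne hab)
    rcases this with ⟨h, _⟩ | ⟨h, _⟩
    · exact Or.inr (Or.inl h)
    · right; right
      simpa [neg_sub] using h
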